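/- There exist a norm N on ℝ^{np} satisfying ‖z‖ ≤ N(z) for all z ∈ ℝ^{np} (where ‖·‖ is the Euclidean norm) and a constant σ ∈ (0,1) such that N(Rz − V_∞ z) ≤ σ · N(z − V_∞ z) for every z ∈ ℝ^{np}. -/

import Mathlib

open Matrix Filter
open scoped Kronecker

noncomputable section

/-- Euclidean norm on `ι → ℝ`. -/
def eucNorm {ι : Type*} [Fintype ι] (z : ι → ℝ) : ℝ := Real.sqrt (∑ i, z i ^ 2)

/-- Spectral norm (operator 2-norm) of a square real matrix. -/
def specNorm {ι : Type*} [Fintype ι] (A : Matrix ι ι ℝ) : ℝ :=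
  sSup {c : ℝ | ∃ z : ι → ℝ, eucNorm z ≤ 1 ∧ c = eucNorm (A.mulVec z)}

/-- Matrix norm induced by a vector norm `N`: `sup_{z ≠ 0} N (A z) / N z`. -/
def opNorm {ι : Type*} [Fintype ι] (N : (ι → ℝ) → ℝ) (A : Matrix ι ι ℝ) : ℝ :=
  sSup {c : ℝ | ∃ z : ι → ℝ, z ≠ 0 ∧ c = N (A.mulVec z) / N z}

/-- `g` is the gradient of `f : ℝ^p → ℝ`. -/
def IsGradient {p : ℕ} (f : (Fin p → ℝ) → ℝ) (g : (Fin p → ℝ) → Fin p → ℝ) : Prop :=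
  ∀ x, HasFDerivAt f (∑ j, g x j • (ContinuousLinearMap.proj j : (Fin p → ℝ) →L[ℝ] ℝ)) x

/-- `R = R̄ ⊗ I_p`. -/
def RK (n p : ℕ) (Rb : Matrix (Fin n) (Fin n) ℝ) :
    Matrix (Fin n × Fin p) (Fin n × Fin p) ℝ :=
  Rb ⊗ₖ (1 : Matrix (Fin p) (Fin p) ℝ)

/-- `V_∞ = (1_n π^T) ⊗ I_p`. -/
def VinfK (n p : ℕ) (π : Fin n → ℝ) :
    Matrix (Fin n × Fin p) (Fin n × Fin p) ℝ :=
  (Matrix.of (fun _ j => π j) : Matrix (Fin n) (Fin n) ℝ) ⊗ₖ (1 : Matrix (Fin p) (Fin p) ℝ)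

/-- `V(k) = R̄^k ⊗ I_p`. -/
def VK (n p : ℕ) (Rb : Matrix (Fin n) (Fin n) ℝ) (k : ℕ) :
    Matrix (Fin n × Fin p) (Fin n × Fin p) ℝ :=
  (Rb ^ k) ⊗ₖ (1 : Matrix (Fin p) (Fin p) ℝ)

/-- `Ṽ(k)⁻¹ = diag(((R̄^k)_{11})⁻¹, …, ((R̄^k)_{nn})⁻¹) ⊗ I_p`. -/
def VtinvK (n p : ℕ) (Rb : Matrix (Fin n) (Fin n) ℝ) (k : ℕ) :
    Matrix (Fin n × Fin p) (Fin n × Fin p) ℝ :=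
  Matrix.diagonal (fun q => ((Rb ^ k) q.1 q.1)⁻¹)

/-- `∇f(z) = (∇f_1(z_1), …, ∇f_n(z_n))` block-wise. -/
def gradf {n p : ℕ} (g : Fin n → (Fin p → ℝ) → Fin p → ℝ) (z : Fin n × Fin p → ℝ) :
    Fin n × Fin p → ℝ :=
  fun q => g q.1 (fun j => z (q.1, j)) q.2

/-- `x*_vec = 1_n ⊗ x*`. -/
def starVec (n p : ℕ) (xstar : Fin p → ℝ) : Fin n × Fin p → ℝ := fun q => xstar q.2

end

section StmtAux

open Finset

namespace Stmt2Aux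

variable {ι : Type*} [Fintype ι]

lemma eucNorm_eq (z : ι → ℝ) :
    eucNorm z = ‖((WithLp.equiv 2 (ι → ℝ)).symm z : EuclideanSpace ℝ ι)‖ := by
  rw [EuclideanSpace.norm_eq]
  unfold eucNorm
  congr 1
  refine Finset.sum_congr rfl fun i _ => ?_
  rw [Real.norm_eq_abs, sq_abs]; rfl

lemma eucNorm_nonneg (z : ι → ℝ) : 0 ≤ eucNorm z := Real.sqrt_nonneg _

lemma eucNorm_add_le (z w : ι → ℝ) : eucNorm (z + w) ≤ eucNorm z + eucNorm w := by
  rw [eucNorm_eq, eucNorm_eq, eucNorm_eq]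
  exact norm_add_le ((WithLp.equiv 2 (ι → ℝ)).symm z) ((WithLp.equiv 2 (ι → ℝ)).symm w)

lemma eucNorm_smul (a : ℝ) (z : ι → ℝ) : eucNorm (a • z) = |a| * eucNorm z := by
  rw [eucNorm_eq, eucNorm_eq]
  have : ((WithLp.equiv 2 (ι → ℝ)).symm (a • z) : EuclideanSpace ℝ ι)
      = a • ((WithLp.equiv 2 (ι → ℝ)).symm z) := rfl
  rw [this, norm_smul, Real.norm_eq_abs]

lemma eucNorm_eq_zero_iff (z : ι → ℝ) : eucNorm z = 0 ↔ z = 0 := by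
  rw [eucNorm_eq, norm_eq_zero]
  constructor
  · intro h
    exact (WithLp.equiv 2 (ι → ℝ)).symm.injective (a₂ := 0) h
  · rintro rfl; rfl

lemma eucNorm_sq (z : ι → ℝ) : eucNorm z ^ 2 = ∑ i, z i ^ 2 :=
  Real.sq_sqrt (Finset.sum_nonneg fun i _ => sq_nonneg _)

lemma abs_le_eucNorm (z : ι → ℝ) (i : ι) : |z i| ≤ eucNorm z := by
  rw [← Real.sqrt_sq_eq_abs]
  exact Real.sqrt_le_sqrt (Finset.single_le_sum (fun j _ => sq_nonneg (z j)) (mem_univ i))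

lemma eucNorm_le_of_bound {b : ℝ} (hb : 0 ≤ b) {z : ι → ℝ} (h : ∀ i, |z i| ≤ b) :
    eucNorm z ≤ Real.sqrt (Fintype.card ι) * b := by
  have h1 : eucNorm z ≤ Real.sqrt (∑ _i : ι, b ^ 2) := by
    apply Real.sqrt_le_sqrt
    refine Finset.sum_le_sum fun i _ => ?_
    rw [← sq_abs]
    exact pow_le_pow_left₀ (abs_nonneg _) (h i) 2
  refine h1.trans (le_of_eq ?_)
  rw [Finset.sum_const, card_univ, nsmul_eq_mul, Real.sqrt_mul (by positivity), Real.sqrt_sq hb]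

variable {n : ℕ}

lemma pow_entry_nonneg (Rb : Matrix (Fin n) (Fin n) ℝ) (hnonneg : ∀ i j, 0 ≤ Rb i j) (k : ℕ) :
    ∀ i j, 0 ≤ (Rb ^ k) i j := by
  induction k with
  | zero => intro i j; simp [Matrix.one_apply]; positivity
  | succ k ih =>
    intro i j
    rw [pow_succ, Matrix.mul_apply]
    exact Finset.sum_nonneg fun l _ => mul_nonneg (ih i l) (hnonneg l j)

lemma pow_rowsum (Rb : Matrix (Fin n) (Fin n) ℝ) (hrow : ∀ i, ∑ j, Rb i j = 1) (k : ℕ) :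
    ∀ i, ∑ j, (Rb ^ k) i j = 1 := by
  induction k with
  | zero => intro i; simp [Matrix.one_apply]
  | succ k ih =>
    intro i
    rw [pow_succ']
    simp only [Matrix.mul_apply]
    rw [Finset.sum_comm]
    calc (∑ l, ∑ j, Rb i l * (Rb ^ k) l j) = ∑ l, Rb i l * ∑ j, (Rb ^ k) l j := by
          simp [Finset.mul_sum]
    _ = 1 := by simp only [ih]; simpa using hrow i

lemma pow_pos_mono (Rb : Matrix (Fin n) (Fin n) ℝ) (hnonneg : ∀ i j, 0 ≤ Rb i j)
    (hdiag : ∀ i, 0 < Rb i i)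
    {k l : ℕ} (hkl : k ≤ l) {i j : Fin n} (h : 0 < (Rb ^ k) i j) :
    0 < (Rb ^ l) i j := by
  induction l, hkl using Nat.le_induction with
  | base => exact h
  | succ l _ ih =>
    rw [pow_succ, Matrix.mul_apply]
    have h1 : 0 < (Rb ^ l) i j * Rb j j := mul_pos ih (hdiag j)
    have h2 : ∀ x ∈ Finset.univ, 0 ≤ (Rb ^ l) i x * Rb x j :=
      fun x _ => mul_nonneg (pow_entry_nonneg Rb hnonneg l i x) (hnonneg x j)
    exact lt_of_lt_of_le h1 (Finset.single_le_sum h2 (mem_univ j))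

lemma exists_primitive (Rb : Matrix (Fin n) (Fin n) ℝ) (hnonneg : ∀ i j, 0 ≤ Rb i j)
    (hdiag : ∀ i, 0 < Rb i i) (hirr : ∀ i j, ∃ k : ℕ, 0 < (Rb ^ k) i j) :
    ∃ m : ℕ, 1 ≤ m ∧ ∀ i j, 0 < (Rb ^ m) i j := by
  choose f hf using hirr
  refine ⟨(Finset.univ.sup fun q : Fin n × Fin n => f q.1 q.2) + 1, Nat.le_add_left 1 _, ?_⟩
  intro i j
  exact pow_pos_mono Rb hnonneg hdiag
    (le_trans (Finset.le_sup (mem_univ (i, j))) (Nat.le_succ _)) (hf i j)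

lemma stat_pow (Rb : Matrix (Fin n) (Fin n) ℝ) {π : Fin n → ℝ}
    (hπstat : Matrix.vecMul π Rb = π) (k : ℕ) : Matrix.vecMul π (Rb ^ k) = π := by
  induction k with
  | zero => simp [Matrix.vecMul_one]
  | succ k ih => rw [pow_succ, ← Matrix.vecMul_vecMul, ih, hπstat]

/-- One-step Dobrushin oscillation bound. -/
lemma dobrushin_step {δ : ℝ} {S : Matrix (Fin n) (Fin n) ℝ}
    (hS1 : ∀ i j, δ ≤ S i j) (hS2 : ∀ i, ∑ j, S i j = 1)
    {y : Fin n → ℝ} {lo hi : ℝ} (hlo : ∀ i, lo ≤ y i) (hhi : ∀ i, y i ≤ hi)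
    (hll : lo ≤ hi) (i j : Fin n) :
    S.mulVec y i - S.mulVec y j ≤ (1 - n * δ) * (hi - lo) := by
  set t : Fin n → ℝ := fun k => min (S i k) (S j k) with ht
  set T : ℝ := ∑ k, t k with hT
  have hTd : (n : ℝ) * δ ≤ T := by
    calc (n : ℝ) * δ = ∑ _k : Fin n, δ := by simp [mul_comm]
    _ ≤ T := Finset.sum_le_sum fun k _ => le_min (hS1 i k) (hS1 j k)
  have hsum1 : ∑ k, (S i k - t k) = 1 - T := by
    rw [Finset.sum_sub_distrib, hS2 i]
  have hsum2 : ∑ k, (S j k - t k) = 1 - T := by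
    rw [Finset.sum_sub_distrib, hS2 j]
  have hup : S.mulVec y i ≤ ∑ k, t k * y k + (1 - T) * hi := by
    have e : S.mulVec y i = ∑ k, t k * y k + ∑ k, (S i k - t k) * y k := by
      rw [Matrix.mulVec, ← Finset.sum_add_distrib]
      refine Finset.sum_congr rfl fun k _ => ?_
      show S i k * y k = _
      ring
    rw [e]
    have h2 : ∑ k, (S i k - t k) * y k ≤ (1 - T) * hi := by
      rw [← hsum1, Finset.sum_mul]
      refine Finset.sum_le_sum fun k _ => ?_
      exact mul_le_mul_of_nonneg_left (hhi k) (sub_nonneg.mpr (min_le_left _ _))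
    linarith
  have hdown : ∑ k, t k * y k + (1 - T) * lo ≤ S.mulVec y j := by
    have e : S.mulVec y j = ∑ k, t k * y k + ∑ k, (S j k - t k) * y k := by
      rw [Matrix.mulVec, ← Finset.sum_add_distrib]
      refine Finset.sum_congr rfl fun k _ => ?_
      show S j k * y k = _
      ring
    rw [e]
    have h2 : (1 - T) * lo ≤ ∑ k, (S j k - t k) * y k := by
      rw [← hsum2, Finset.sum_mul]
      refine Finset.sum_le_sum fun k _ => ?_
      exact mul_le_mul_of_nonneg_left (hlo k) (sub_nonneg.mpr (min_le_right _ _))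
    linarith
  nlinarith [hTd, hll, hup, hdown]

lemma dobrushin_iter {δ : ℝ} {S : Matrix (Fin n) (Fin n) ℝ} (hn : 1 ≤ n)
    (hc : 0 ≤ 1 - n * δ) (hS1 : ∀ i j, δ ≤ S i j) (hS2 : ∀ i, ∑ j, S i j = 1)
    (x : Fin n → ℝ) (k : ℕ) :
    ∃ lo hi : ℝ, (∀ i, lo ≤ ((S ^ k).mulVec x) i) ∧ (∀ i, ((S ^ k).mulVec x) i ≤ hi) ∧
      hi - lo ≤ (1 - n * δ) ^ k * (2 * eucNorm x) := by
  have i0 : Fin n := ⟨0, hn⟩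
  induction k with
  | zero =>
    refine ⟨-eucNorm x, eucNorm x, ?_, ?_, ?_⟩
    · intro i
      simp only [pow_zero, Matrix.one_mulVec]
      exact (abs_le.mp (abs_le_eucNorm x i)).1
    · intro i
      simp only [pow_zero, Matrix.one_mulVec]
      exact (abs_le.mp (abs_le_eucNorm x i)).2
    · rw [pow_zero, one_mul]; ring_nf; rfl
  | succ k ih =>
    obtain ⟨lo, hi, h1, h2, h3⟩ := ih
    have hll : lo ≤ hi := le_trans (h1 i0) (h2 i0)
    have hrec : (S ^ (k+1)).mulVec x = S.mulVec ((S ^ k).mulVec x) := by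
      rw [pow_succ', ← Matrix.mulVec_mulVec]
    obtain ⟨jm, _, hjm⟩ := Finset.exists_min_image Finset.univ
      (fun j => (S ^ (k+1)).mulVec x j) ⟨i0, mem_univ _⟩
    obtain ⟨jM, _, hjM⟩ := Finset.exists_max_image Finset.univ
      (fun j => (S ^ (k+1)).mulVec x j) ⟨i0, mem_univ _⟩
    refine ⟨(S ^ (k+1)).mulVec x jm, (S ^ (k+1)).mulVec x jM,
      fun i => hjm i (mem_univ _), fun i => hjM i (mem_univ _), ?_⟩
    have hstep : (S ^ (k+1)).mulVec x jM - (S ^ (k+1)).mulVec x jm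
        ≤ (1 - n * δ) * (hi - lo) := by
      rw [hrec]
      exact dobrushin_step hS1 hS2 h1 h2 hll jM jm
    calc (S ^ (k+1)).mulVec x jM - (S ^ (k+1)).mulVec x jm
        ≤ (1 - n * δ) * (hi - lo) := hstep
    _ ≤ (1 - n * δ) * ((1 - n * δ) ^ k * (2 * eucNorm x)) := mul_le_mul_of_nonneg_left h3 hc
    _ = (1 - n * δ) ^ (k + 1) * (2 * eucNorm x) := by rw [pow_succ']; ring

/-- Entrywise deviation bound from the stationary average. -/
lemma dev_bound {δ : ℝ} {S : Matrix (Fin n) (Fin n) ℝ} (hn : 1 ≤ n)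
    (hc : 0 ≤ 1 - n * δ) (hS1 : ∀ i j, δ ≤ S i j) (hS2 : ∀ i, ∑ j, S i j = 1)
    {π : Fin n → ℝ} (hπpos : ∀ i, 0 ≤ π i) (hπsum : ∑ i, π i = 1)
    (hπstat : Matrix.vecMul π S = π)
    (x : Fin n → ℝ) (k : ℕ) (i : Fin n) :
    |((S ^ k).mulVec x) i - π ⬝ᵥ x| ≤ (1 - n * δ) ^ k * (2 * eucNorm x) := by
  have hstatk : Matrix.vecMul π (S ^ k) = π := stat_pow S hπstat k
  obtain ⟨lo, hi, h1, h2, h3⟩ := dobrushin_iter hn hc hS1 hS2 x k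
  have hdot : π ⬝ᵥ x = π ⬝ᵥ ((S ^ k).mulVec x) := by
    rw [Matrix.dotProduct_mulVec, hstatk]
  set y := (S ^ k).mulVec x with hy
  have hdlo : lo ≤ π ⬝ᵥ y := by
    calc lo = ∑ i, π i * lo := by rw [← Finset.sum_mul, hπsum, one_mul]
    _ ≤ ∑ i, π i * y i := Finset.sum_le_sum fun i _ =>
        mul_le_mul_of_nonneg_left (h1 i) (hπpos i)
    _ = π ⬝ᵥ y := rfl
  have hdhi : π ⬝ᵥ y ≤ hi := by
    calc π ⬝ᵥ y = ∑ i, π i * y i := rfl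
    _ ≤ ∑ i, π i * hi := Finset.sum_le_sum fun i _ =>
        mul_le_mul_of_nonneg_left (h2 i) (hπpos i)
    _ = hi := by rw [← Finset.sum_mul, hπsum, one_mul]
  rw [hdot, abs_le]
  constructor
  · have := h1 i; linarith
  · have := h2 i; linarith

variable {p : ℕ}

open scoped Kronecker

lemma kron_mulVec (A : Matrix (Fin n) (Fin n) ℝ) (z : Fin n × Fin p → ℝ)
    (q : Fin n × Fin p) :
    ((A ⊗ₖ (1 : Matrix (Fin p) (Fin p) ℝ)).mulVec z) q
      = (A.mulVec (fun k => z (k, q.2))) q.1 := by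
  obtain ⟨i, j⟩ := q
  simp only [Matrix.mulVec, dotProduct, Fintype.sum_prod_type,
    Matrix.kroneckerMap_apply, Matrix.one_apply, mul_ite, mul_one, mul_zero,
    ite_mul, zero_mul]
  refine Finset.sum_congr rfl fun k _ => ?_
  simp

lemma kron_pow (A : Matrix (Fin n) (Fin n) ℝ) (k : ℕ) :
    (A ⊗ₖ (1 : Matrix (Fin p) (Fin p) ℝ)) ^ k
      = (A ^ k) ⊗ₖ (1 : Matrix (Fin p) (Fin p) ℝ) := by
  induction k with
  | zero => simp [Matrix.one_kronecker_one]
  | succ k ih => rw [pow_succ, pow_succ, ih, ← Matrix.mul_kronecker_mul, Matrix.one_mul]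

lemma kron_opbound {C : ℝ} (hC : 0 ≤ C) {A : Matrix (Fin n) (Fin n) ℝ}
    (h : ∀ x : Fin n → ℝ, eucNorm (A.mulVec x) ≤ C * eucNorm x)
    (z : Fin n × Fin p → ℝ) :
    eucNorm ((A ⊗ₖ (1 : Matrix (Fin p) (Fin p) ℝ)).mulVec z) ≤ C * eucNorm z := by
  set w := (A ⊗ₖ (1 : Matrix (Fin p) (Fin p) ℝ)).mulVec z with hw
  have key : ∑ q : Fin n × Fin p, w q ^ 2 ≤ C ^ 2 * ∑ q : Fin n × Fin p, z q ^ 2 := by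
    rw [Fintype.sum_prod_type_right,
      Fintype.sum_prod_type_right (f := fun q : Fin n × Fin p => z q ^ 2), Finset.mul_sum]
    refine Finset.sum_le_sum fun j _ => ?_
    have h1 : ∑ i, w (i, j) ^ 2 = eucNorm (A.mulVec fun k => z (k, j)) ^ 2 := by
      rw [eucNorm_sq]
      exact Finset.sum_congr rfl fun i _ => by rw [hw, kron_mulVec]
    have h2 : ∑ i, z (i, j) ^ 2 = eucNorm (fun k : Fin n => z (k, j)) ^ 2 := by
      rw [eucNorm_sq]
    rw [h1, h2, ← mul_pow]
    exact pow_le_pow_left₀ (eucNorm_nonneg _) (h _) 2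
  have hsq : eucNorm w ^ 2 ≤ (C * eucNorm z) ^ 2 := by
    rw [eucNorm_sq, mul_pow]
    calc ∑ q, w q ^ 2 ≤ C ^ 2 * ∑ q, z q ^ 2 := key
    _ = C ^ 2 * eucNorm z ^ 2 := by rw [eucNorm_sq]
  exact (pow_le_pow_iff_left₀ (eucNorm_nonneg _)
    (mul_nonneg hC (eucNorm_nonneg _)) (by norm_num)).mp hsq

end Stmt2Aux

end StmtAux


/-- there exist a norm `N` on `ℝ^{np}` dominating the Euclidean norm and a
constant `σ ∈ (0,1)` such that `N(Rz − V_∞ z) ≤ σ N(z − V_∞ z)` for all `z`. -/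
theorem stmt2 (n p : ℕ) (hn : 1 ≤ n) (hp : 1 ≤ p) (Rb : Matrix (Fin n) (Fin n) ℝ)
    (hnonneg : ∀ i j, 0 ≤ Rb i j) (hrow : ∀ i, ∑ j, Rb i j = 1)
    (hdiag : ∀ i, 0 < Rb i i)
    (hirr : ∀ i j, ∃ k : ℕ, 0 < (Rb ^ k) i j)
    (π : Fin n → ℝ) (hπpos : ∀ i, 0 < π i) (hπsum : ∑ i, π i = 1)
    (hπstat : Matrix.vecMul π Rb = π) :
    ∃ (N : (Fin n × Fin p → ℝ) → ℝ) (σ : ℝ),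
      (∀ z w, N (z + w) ≤ N z + N w) ∧
      (∀ (a : ℝ) z, N (a • z) = |a| * N z) ∧
      (∀ z, N z = 0 ↔ z = 0) ∧
      (∀ z, eucNorm z ≤ N z) ∧
      0 < σ ∧ σ < 1 ∧
      ∀ z, N ((RK n p Rb).mulVec z - (VinfK n p π).mulVec z) ≤
        σ * N (z - (VinfK n p π).mulVec z) := by
  classical
  open Stmt2Aux in
  -- the rank-one projection matrix `P = 1 π^T`
  set P : Matrix (Fin n) (Fin n) ℝ := Matrix.of (fun _ j => π j) with hPdef
  -- primitivity: some power of `Rb` is entrywise positive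
  obtain ⟨m, hm1, hSpos⟩ := Stmt2Aux.exists_primitive Rb hnonneg hdiag hirr
  set S : Matrix (Fin n) (Fin n) ℝ := Rb ^ m with hSdef
  -- the minimal entry δ of S
  obtain ⟨q0, -, hq0⟩ := Finset.exists_min_image Finset.univ
    (fun q : Fin n × Fin n => S q.1 q.2) ⟨(⟨0, hn⟩, ⟨0, hn⟩), Finset.mem_univ _⟩
  set δ : ℝ := S q0.1 q0.2 with hδdef
  have hδpos : 0 < δ := hSpos q0.1 q0.2
  have hS1 : ∀ i j, δ ≤ S i j := fun i j => hq0 (i, j) (Finset.mem_univ _)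
  have hS2 : ∀ i, ∑ j, S i j = 1 := Stmt2Aux.pow_rowsum Rb hrow m
  set c : ℝ := 1 - n * δ with hcdef
  have hc0 : 0 ≤ c := by
    have h1 : (n : ℝ) * δ ≤ 1 := by
      calc (n : ℝ) * δ = ∑ _k : Fin n, δ := by simp [mul_comm]
      _ ≤ ∑ k, S q0.1 k := Finset.sum_le_sum fun k _ => hS1 _ _
      _ = 1 := hS2 _
    simp only [hcdef]; linarith
  have hc1 : c < 1 := by
    have hn' : (0 : ℝ) < n := by exact_mod_cast hn
    have : 0 < (n : ℝ) * δ := mul_pos hn' hδpos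
    simp only [hcdef]; linarith
  have hsn : (1 : ℝ) ≤ Real.sqrt n := by
    rw [show (1:ℝ) = Real.sqrt 1 by simp]
    exact Real.sqrt_le_sqrt (by exact_mod_cast hn)
  have hsn0 : (0 : ℝ) < Real.sqrt n := lt_of_lt_of_le one_pos hsn
  -- choose kk with c^kk small
  obtain ⟨kk, hkk⟩ : ∃ kk : ℕ, c ^ kk < (4 * Real.sqrt n)⁻¹ :=
    exists_pow_lt_of_lt_one (by positivity) hc1
  have hkk1 : 1 ≤ kk := by
    by_contra hcon
    push_neg at hcon
    interval_cases kk
    rw [pow_zero] at hkk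
    have h4 : (4 * Real.sqrt n)⁻¹ ≤ 1 := by
      rw [inv_le_one_iff₀]; right; linarith
    linarith
  set K : ℕ := m * kk with hKdef
  have hK1 : 1 ≤ K := Nat.one_le_iff_ne_zero.mpr (Nat.mul_ne_zero
    (Nat.one_le_iff_ne_zero.mp hm1) (Nat.one_le_iff_ne_zero.mp hkk1))
  -- the contraction factor σ
  set σ : ℝ := ((1:ℝ)/2) ^ ((K:ℝ)⁻¹) with hσdef
  have hσpos : 0 < σ := Real.rpow_pos_of_pos (by norm_num) _
  have hσlt1 : σ < 1 := Real.rpow_lt_one (by norm_num) (by norm_num)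
    (by positivity)
  have hσ0 : σ ≠ 0 := ne_of_gt hσpos
  have hσK : σ ^ K = 1/2 := by
    rw [hσdef, ← Real.rpow_natCast (((1:ℝ)/2) ^ ((K:ℝ)⁻¹)) K, ← Real.rpow_mul (by norm_num),
      inv_mul_cancel₀ (by exact_mod_cast Nat.one_le_iff_ne_zero.mp hK1), Real.rpow_one]
  -- matrix identities for P
  have hPP : P * P = P := by
    ext i j
    simp only [Matrix.mul_apply, hPdef, Matrix.of_apply]
    rw [← Finset.sum_mul, hπsum, one_mul]
  have hPR : P * Rb = P := by
    ext i j
    simp only [Matrix.mul_apply, hPdef, Matrix.of_apply]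
    have := congrFun hπstat j
    simpa [Matrix.vecMul, dotProduct] using this
  have hRkP : ∀ k : ℕ, Rb ^ k * P = P := by
    intro k
    ext i j
    simp only [Matrix.mul_apply, hPdef, Matrix.of_apply]
    rw [← Finset.sum_mul, Stmt2Aux.pow_rowsum Rb hrow k i, one_mul]
  -- (Rb - P)^k = Rb^k - P for k ≥ 1
  have hsubpow : ∀ k : ℕ, 1 ≤ k → (Rb - P) ^ k = Rb ^ k - P := by
    intro k hk
    induction k, hk using Nat.le_induction with
    | base => rw [pow_one, pow_one]
    | succ k _ ih =>
      rw [pow_succ, ih, sub_mul, mul_sub, mul_sub, hRkP, hPR, hPP, ← pow_succ]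
      abel
  -- the key matrices
  set M : Matrix (Fin n × Fin p) (Fin n × Fin p) ℝ :=
    (Rb - P) ⊗ₖ (1 : Matrix (Fin p) (Fin p) ℝ) with hMdef
  -- the n-level contraction bound for Rb^K - P
  have hπstatS : Matrix.vecMul π S = π := Stmt2Aux.stat_pow Rb hπstat m
  have hnlevel : ∀ x : Fin n → ℝ,
      eucNorm ((Rb ^ K - P).mulVec x) ≤ σ ^ K * eucNorm x := by
    intro x
    have hdev : ∀ i, |((Rb ^ K - P).mulVec x) i| ≤ c ^ kk * (2 * eucNorm x) := by
      intro i
      have h1 : ((Rb ^ K - P).mulVec x) i = ((S ^ kk).mulVec x) i - π ⬝ᵥ x := by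
        rw [hKdef, pow_mul, ← hSdef, Matrix.sub_mulVec]
        simp only [Pi.sub_apply]
        congr 1
      rw [h1]
      exact Stmt2Aux.dev_bound hn hc0 hS1 hS2 (fun i => le_of_lt (hπpos i)) hπsum hπstatS x kk i
    have hb : (0:ℝ) ≤ c ^ kk * (2 * eucNorm x) := by
      have := Stmt2Aux.eucNorm_nonneg x
      positivity
    have h2 := Stmt2Aux.eucNorm_le_of_bound hb hdev
    rw [Fintype.card_fin] at h2
    refine h2.trans ?_
    rw [hσK]
    have hEx : 0 ≤ eucNorm x := Stmt2Aux.eucNorm_nonneg x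
    have h4 : (4 * Real.sqrt n) * (4 * Real.sqrt n)⁻¹ = 1 :=
      mul_inv_cancel₀ (by positivity)
    have hck0 : 0 ≤ c ^ kk := pow_nonneg hc0 kk
    nlinarith [hkk, hsn0, hEx, h4, mul_le_mul_of_nonneg_right (le_of_lt hkk) hEx]
  -- key bound at the np level
  have hKey : ∀ w : Fin n × Fin p → ℝ,
      eucNorm ((M ^ K).mulVec w) ≤ σ ^ K * eucNorm w := by
    intro w
    have hMK : M ^ K = (Rb ^ K - P) ⊗ₖ (1 : Matrix (Fin p) (Fin p) ℝ) := by
      rw [hMdef, Stmt2Aux.kron_pow, hsubpow K hK1]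
    rw [hMK]
    exact Stmt2Aux.kron_opbound (by positivity) hnlevel w
  -- define the norm N
  set N : (Fin n × Fin p → ℝ) → ℝ :=
    fun z => ∑ j ∈ Finset.range K, (σ⁻¹) ^ j * eucNorm ((M ^ j).mulVec z) with hNdef
  have hterm_nonneg : ∀ (z) (j : ℕ), 0 ≤ (σ⁻¹) ^ j * eucNorm ((M ^ j).mulVec z) := by
    intro z j
    exact mul_nonneg (by positivity) (Stmt2Aux.eucNorm_nonneg _)
  have hN0 : ∀ z, eucNorm z ≤ N z := by
    intro z
    have h0 : (σ⁻¹) ^ 0 * eucNorm ((M ^ 0).mulVec z) = eucNorm z := by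
      simp [Matrix.one_mulVec]
    calc eucNorm z = (σ⁻¹) ^ 0 * eucNorm ((M ^ 0).mulVec z) := h0.symm
    _ ≤ N z := Finset.single_le_sum (fun j _ => hterm_nonneg z j)
        (Finset.mem_range.mpr (Nat.lt_of_lt_of_le Nat.zero_lt_one hK1))
  have hNnonneg : ∀ z, 0 ≤ N z := fun z =>
    Finset.sum_nonneg fun j _ => hterm_nonneg z j
  refine ⟨N, σ, ?_, ?_, ?_, hN0, hσpos, hσlt1, ?_⟩
  · -- triangle inequality
    intro z w
    rw [hNdef, ← Finset.sum_add_distrib]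
    refine Finset.sum_le_sum fun j _ => ?_
    rw [← mul_add]
    refine mul_le_mul_of_nonneg_left ?_ (by positivity)
    rw [Matrix.mulVec_add]
    exact Stmt2Aux.eucNorm_add_le _ _
  · -- homogeneity
    intro a z
    rw [hNdef, Finset.mul_sum]
    refine Finset.sum_congr rfl fun j _ => ?_
    rw [Matrix.mulVec_smul, Stmt2Aux.eucNorm_smul]
    ring
  · -- definiteness
    intro z
    constructor
    · intro h
      have h1 : eucNorm z ≤ 0 := h ▸ hN0 z
      have h2 : eucNorm z = 0 := le_antisymm h1 (Stmt2Aux.eucNorm_nonneg z)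
      exact (Stmt2Aux.eucNorm_eq_zero_iff z).mp h2
    · rintro rfl
      rw [hNdef]
      refine Finset.sum_eq_zero fun j _ => ?_
      rw [Matrix.mulVec_zero]
      have : eucNorm (0 : Fin n × Fin p → ℝ) = 0 :=
        (Stmt2Aux.eucNorm_eq_zero_iff 0).mpr rfl
      rw [this, mul_zero]
  · -- contraction
    intro z
    -- identify R z - V∞ z with M z
    have hRV : RK n p Rb - VinfK n p π = M := by
      rw [hMdef, RK, VinfK, hPdef]
      ext ⟨i, j⟩ ⟨k, l⟩
      simp only [Matrix.sub_apply, Matrix.kroneckerMap_apply, Matrix.of_apply]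
      ring
    have hMV : M * VinfK n p π = 0 := by
      rw [hMdef, VinfK, ← hPdef, ← Matrix.mul_kronecker_mul, Matrix.mul_one]
      have h0 : (Rb - P) * P = 0 := by
        have h1 : Rb * P = P := by rw [← pow_one Rb]; exact hRkP 1
        rw [sub_mul, h1, hPP, sub_self]
      rw [h0, Matrix.zero_kronecker]
    have hgoal1 : (RK n p Rb).mulVec z - (VinfK n p π).mulVec z = M.mulVec z := by
      rw [← Matrix.sub_mulVec, hRV]
    have hgoal2 : M.mulVec z = M.mulVec (z - (VinfK n p π).mulVec z) := by
      rw [Matrix.mulVec_sub, Matrix.mulVec_mulVec, hMV, Matrix.zero_mulVec, sub_zero]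
    rw [hgoal1, hgoal2]
    set w := z - (VinfK n p π).mulVec z with hwdef
    -- now show N (M w) ≤ σ * N w
    have hterm : ∀ j : ℕ, (M ^ j).mulVec (M.mulVec w) = (M ^ (j+1)).mulVec w := by
      intro j
      rw [Matrix.mulVec_mulVec, ← pow_succ]
    set f : ℕ → ℝ := fun j => (σ⁻¹) ^ j * eucNorm ((M ^ j).mulVec w) with hfdef
    have h1 : N (M.mulVec w) = σ * ∑ j ∈ Finset.range K, f (j+1) := by
      rw [hNdef, Finset.mul_sum]
      refine Finset.sum_congr rfl fun j _ => ?_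
      rw [hterm j, hfdef]
      simp only []
      rw [pow_succ]
      field_simp
      linear_combination (-(1/σ)^j * eucNorm ((M ^ j * M) *ᵥ w)) * mul_inv_cancel₀ hσ0
    have hf0 : f 0 = eucNorm w := by
      rw [hfdef]; simp [Matrix.one_mulVec]
    have hfK : f K ≤ f 0 := by
      rw [hf0]
      show (σ⁻¹) ^ K * eucNorm ((M ^ K).mulVec w) ≤ eucNorm w
      calc (σ⁻¹) ^ K * eucNorm ((M ^ K).mulVec w)
          ≤ (σ⁻¹) ^ K * (σ ^ K * eucNorm w) :=
        mul_le_mul_of_nonneg_left (hKey w) (by positivity)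
      _ = eucNorm w := by
        rw [← mul_assoc, ← mul_pow, inv_mul_cancel₀ hσ0, one_pow, one_mul]
    have h2 : ∑ j ∈ Finset.range K, f (j+1) ≤ ∑ j ∈ Finset.range K, f j := by
      have e1 : ∑ j ∈ Finset.range (K+1), f j
          = (∑ j ∈ Finset.range K, f (j+1)) + f 0 := Finset.sum_range_succ' f K
      have e2 : ∑ j ∈ Finset.range (K+1), f j
          = (∑ j ∈ Finset.range K, f j) + f K := Finset.sum_range_succ f K
      linarith
    calc N (M.mulVec w) = σ * ∑ j ∈ Finset.range K, f (j+1) := h1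
    _ ≤ σ * ∑ j ∈ Finset.range K, f j := mul_le_mul_of_nonneg_left h2 (le_of_lt hσpos)
    _ = σ * N w := by rw [hNdef]
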